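/- Let d ≥ 1 and r ≥ 1 be integers and let L ⊆ {0,…,d−1}^r be a set of r-tuples with |L| = ℓ. Then there exist a matrix A' ∈ ℤ^{m'×n'} and a vector b' ∈ ℤ^{m'} with n' = r + 2rℓ variables and m' = 2r + (6r+1)ℓ constraints, all entries of A' and all entries of b' lying in {−d,…,d}, such that for every integer vector a = (a_1,…,a_r): there exists an integer solution x of A'x ≤ b' whose first r coordinates equal a if and only if a ∈ {0,…,d−1}^r \ L. -/

import Mathlib

namespace RepSys

abbrev V (r ℓ : ℕ) := Fin r ⊕ (Fin ℓ × Fin r × Bool)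
abbrev FIdx (r ℓ : ℕ) := Fin r ⊕ (Fin ℓ × Fin r × Fin 3)
abbrev Rw (r ℓ : ℕ) := (FIdx r ℓ × Bool) ⊕ Fin ℓ

variable (d : ℤ) {r ℓ : ℕ}

def coef : FIdx r ℓ → V r ℓ → ℤ
  | Sum.inl i, Sum.inl j => if j = i then 1 else 0
  | Sum.inl _, Sum.inr _ => 0
  | Sum.inr (_, i, t), Sum.inl j => if t = 0 ∧ j = i then 1 else 0
  | Sum.inr (k, i, t), Sum.inr (k', j, bb) =>
      if k' = k ∧ j = i then
        if t = 0 then (if bb then d else -1)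
        else if t = 1 then (if bb then 0 else 1)
        else (if bb then 1 else 0)
      else 0

def ub (f : Fin ℓ → Fin r → ℤ) : FIdx r ℓ → ℤ
  | Sum.inl _ => d - 1
  | Sum.inr (k, i, t) => if t = 0 then f k i else if t = 1 then d - 1 else 1

def lb (f : Fin ℓ → Fin r → ℤ) : FIdx r ℓ → ℤ
  | Sum.inl _ => 0
  | Sum.inr (k, i, t) => if t = 0 then f k i else 0

def Arow : Rw r ℓ → V r ℓ → ℤ
  | Sum.inl (F, true) => coef d F
  | Sum.inl (F, false) => fun w => -coef d F w
  | Sum.inr k => fun w => match w with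
      | Sum.inl _ => 0
      | Sum.inr (k', _, bb) => if k' = k ∧ bb = false then -1 else 0

def bv (f : Fin ℓ → Fin r → ℤ) : Rw r ℓ → ℤ
  | Sum.inl (F, true) => ub d f F
  | Sum.inl (F, false) => -lb f F
  | Sum.inr _ => -1

def dot (c y : V r ℓ → ℤ) : ℤ := ∑ w, c w * y w

lemma dot_neg (c y : V r ℓ → ℤ) : dot (fun w => -c w) y = -dot c y := by
  simp [dot, neg_mul, Finset.sum_neg_distrib]

lemma dot_coef_inl (i : Fin r) (y : V r ℓ → ℤ) :
    dot (coef d (Sum.inl i)) y = y (Sum.inl i) := by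
  simp [dot, coef, Fintype.sum_sum_type, ite_mul, Finset.sum_ite_eq', Finset.sum_ite_eq]

lemma dot_coef_eq (k : Fin ℓ) (i : Fin r) (y : V r ℓ → ℤ) :
    dot (coef d (Sum.inr (k, i, (0 : Fin 3)))) y
      = y (Sum.inl i) - y (Sum.inr (k, i, false)) + d * y (Sum.inr (k, i, true)) := by
  simp [dot, coef, Fintype.sum_sum_type, Fintype.sum_prod_type, ite_and, ite_mul,
    Finset.sum_ite_eq', Finset.sum_ite_eq]
  ring

lemma dot_coef_u (k : Fin ℓ) (i : Fin r) (y : V r ℓ → ℤ) :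
    dot (coef d (Sum.inr (k, i, (1 : Fin 3)))) y = y (Sum.inr (k, i, false)) := by
  simp [dot, coef, Fintype.sum_sum_type, Fintype.sum_prod_type, ite_and, ite_mul,
    Finset.sum_ite_eq', Finset.sum_ite_eq]

lemma dot_coef_v (k : Fin ℓ) (i : Fin r) (y : V r ℓ → ℤ) :
    dot (coef d (Sum.inr (k, i, (2 : Fin 3)))) y = y (Sum.inr (k, i, true)) := by
  simp [dot, coef, Fintype.sum_sum_type, Fintype.sum_prod_type, ite_and, ite_mul,
    Finset.sum_ite_eq', Finset.sum_ite_eq]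

lemma dot_sumrow (k : Fin ℓ) (y : V r ℓ → ℤ) :
    dot (Arow d (Sum.inr k)) y = -∑ j : Fin r, y (Sum.inr (k, j, false)) := by
  simp [dot, Arow, Fintype.sum_sum_type, Fintype.sum_prod_type, Fintype.sum_bool, ite_and,
    ite_mul, Finset.sum_ite_eq', Finset.sum_ite_eq, Finset.sum_neg_distrib]

lemma Arow_bound (d : ℤ) (hd : 1 ≤ d) (row : Rw r ℓ) (w : V r ℓ) :
    -d ≤ Arow d row w ∧ Arow d row w ≤ d := by
  rcases row with ⟨F, bb⟩ | k
  · have hc : -d ≤ coef d F w ∧ coef d F w ≤ d := by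
      rcases F with i | ⟨k, i, t⟩ <;> rcases w with j | ⟨k', j', b'⟩ <;>
        simp [coef] <;> (try split_ifs) <;> omega
    cases bb
    · rw [show Arow d (Sum.inl (F, false)) = fun w => -coef d F w from rfl]
      constructor <;> simp <;> omega
    · exact hc
  · rcases w with j | ⟨k', j', b'⟩ <;> simp [Arow] <;> (try split_ifs) <;> omega

lemma bv_bound (d : ℤ) (hd : 1 ≤ d) (f : Fin ℓ → Fin r → ℤ)
    (hf : ∀ k i, 0 ≤ f k i ∧ f k i ≤ d - 1) (row : Rw r ℓ) :
    -d ≤ bv d f row ∧ bv d f row ≤ d := by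
  rcases row with ⟨F, bb⟩ | k
  · rcases F with i | ⟨k, i, t⟩ <;> cases bb <;>
      simp [bv, ub, lb] <;> (try split_ifs) <;> (try constructor) <;>
      first | omega | (have := hf k i; omega)
  · simp [bv]; omega

lemma structured (d : ℤ) (hd : 1 ≤ d) (f : Fin ℓ → Fin r → ℤ)
    (hf : ∀ k i, 0 ≤ f k i ∧ f k i ≤ d - 1) (a : Fin r → ℤ) :
    (∃ y : V r ℓ → ℤ, (∀ row, dot (Arow d row) y ≤ bv d f row) ∧ ∀ j, y (Sum.inl j) = a j)
      ↔ ((∀ i, 0 ≤ a i ∧ a i ≤ d - 1) ∧ ∀ k, a ≠ f k) := by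
  constructor
  · rintro ⟨y, hy, hya⟩
    have hub : ∀ F, dot (coef d F) y ≤ ub d f F := fun F => hy (Sum.inl (F, true))
    have hlb : ∀ F, lb f F ≤ dot (coef d F) y := by
      intro F
      have h := hy (Sum.inl (F, false))
      rw [show Arow d (Sum.inl (F, false)) = fun w => -coef d F w from rfl, dot_neg] at h
      have : bv d f (Sum.inl (F, false)) = -lb f F := rfl
      rw [this] at h; linarith
    constructor
    · intro i
      have h1 := hub (Sum.inl i)
      have h2 := hlb (Sum.inl i)
      rw [dot_coef_inl, hya] at h1 h2
      simp [ub, lb] at h1 h2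
      exact ⟨h2, by omega⟩
    · intro k heq
      have huz : ∀ i, y (Sum.inr (k, i, false)) = 0 := by
        intro i
        have e1 := hub (Sum.inr (k, i, 0))
        have e2 := hlb (Sum.inr (k, i, 0))
        rw [dot_coef_eq, hya] at e1 e2
        simp [ub, lb] at e1 e2
        have u1 := hub (Sum.inr (k, i, 1))
        have u2 := hlb (Sum.inr (k, i, 1))
        rw [dot_coef_u] at u1 u2
        simp [ub, lb] at u1 u2
        have v1 := hub (Sum.inr (k, i, 2))
        have v2 := hlb (Sum.inr (k, i, 2))
        rw [dot_coef_v] at v1 v2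
        simp [ub, lb] at v1 v2
        have hai : a i = f k i := by rw [heq]
        set u := y (Sum.inr (k, i, false))
        set v := y (Sum.inr (k, i, true))
        have hu : u = d * v := by omega
        rcases (show v = 0 ∨ v = 1 by omega) with h | h <;> simp [h] at hu <;> omega
      have hs := hy (Sum.inr k)
      rw [dot_sumrow] at hs
      have : bv d f (Sum.inr k) = -1 := rfl
      rw [this, Finset.sum_eq_zero (fun j _ => huz j)] at hs
      omega
  · rintro ⟨hdom, hne⟩
    refine ⟨fun w => match w with
      | Sum.inl j => a j
      | Sum.inr (k, i, false) => a i - f k i + (if a i < f k i then d else 0)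
      | Sum.inr (k, i, true) => if a i < f k i then 1 else 0, ?_, fun j => rfl⟩
    rintro (⟨F, bb⟩ | k)
    · have key : lb f F ≤ dot (coef d F)
          (fun w => match w with
            | Sum.inl j => a j
            | Sum.inr (k, i, false) => a i - f k i + (if a i < f k i then d else 0)
            | Sum.inr (k, i, true) => if a i < f k i then 1 else 0) ∧
          dot (coef d F)
          (fun w => match w with
            | Sum.inl j => a j
            | Sum.inr (k, i, false) => a i - f k i + (if a i < f k i then d else 0)
            | Sum.inr (k, i, true) => if a i < f k i then 1 else 0) ≤ ub d f F := by
        rcases F with i | ⟨k, i, t⟩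
        · rw [dot_coef_inl]
          have := hdom i
          simp [ub, lb]
          constructor <;> omega
        · have ht : t = 0 ∨ t = 1 ∨ t = 2 := by omega
          rcases ht with rfl | rfl | rfl
          · rw [dot_coef_eq]
            simp only [ub, lb, if_pos rfl]
            split_ifs <;> simp <;> ring_nf <;> omega
          · rw [dot_coef_u]
            have h1 := hdom i; have h2 := hf k i
            simp [ub, lb]
            split_ifs <;> constructor <;> omega
          · rw [dot_coef_v]
            simp [ub, lb]
            split_ifs <;> omega
      cases bb
      · rw [show Arow d (Sum.inl (F, false)) = fun w => -coef d F w from rfl, dot_neg,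
          show bv d f (Sum.inl (F, false)) = -lb f F from rfl]
        linarith [key.1]
      · exact key.2
    · rw [show bv d f (Sum.inr k) = -1 from rfl, dot_sumrow]
      have hpos : ∀ j : Fin r,
          (0:ℤ) ≤ a j - f k j + (if a j < f k j then d else 0) := by
        intro j; have := hdom j; have := hf k j; split_ifs <;> omega
      obtain ⟨j0, hj0⟩ := Function.ne_iff.mp (hne k)
      have h1 : (1:ℤ) ≤ a j0 - f k j0 + (if a j0 < f k j0 then d else 0) := by
        have := hdom j0; have := hf k j0; split_ifs <;> omega
      have := Finset.single_le_sum (f := fun j : Fin r =>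
          a j - f k j + (if a j < f k j then d else 0))
        (fun j _ => hpos j) (Finset.mem_univ j0)
      linarith

end RepSys

/-- Realizing the complement of a list `L` of forbidden boundary assignments by a
small explicit system: with `ℓ = |L|` there is a system `A' x ≤ b'` on
`r + 2rℓ` variables and `2r + (6r+1)ℓ` constraints, all entries in `{-d,…,d}`,
whose feasible assignments to the first `r` variables are exactly
`{0,…,d-1}^r \ L`. -/
theorem replacement_system_for_blocked_list (d : ℤ) (hd : 1 ≤ d) (r ℓ : ℕ)
    (hr : 1 ≤ r) (L : Finset (Fin r → ℤ))
    (hL : ∀ f ∈ L, ∀ i, 0 ≤ f i ∧ f i ≤ d - 1)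
    (hcard : L.card = ℓ) :
    ∃ (A' : Matrix (Fin (2 * r + (6 * r + 1) * ℓ)) (Fin (r + 2 * r * ℓ)) ℤ)
      (b' : Fin (2 * r + (6 * r + 1) * ℓ) → ℤ),
      (∀ i j, -d ≤ A' i j ∧ A' i j ≤ d) ∧
      (∀ i, -d ≤ b' i ∧ b' i ≤ d) ∧
      ∀ a : Fin r → ℤ,
        (∃ x : Fin (r + 2 * r * ℓ) → ℤ, A'.mulVec x ≤ b' ∧
          ∀ j : Fin r, x (Fin.castLE (Nat.le_add_right r (2 * r * ℓ)) j) = a j) ↔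
        ((∀ i, 0 ≤ a i ∧ a i ≤ d - 1) ∧ a ∉ L) := by
  classical
  obtain ⟨eL⟩ : Nonempty (↥L ≃ Fin ℓ) :=
    ⟨Fintype.equivFinOfCardEq (by simpa using hcard)⟩
  set f : Fin ℓ → Fin r → ℤ := fun k => ((eL.symm k : ↥L) : Fin r → ℤ) with hfdef
  have hf : ∀ k i, 0 ≤ f k i ∧ f k i ≤ d - 1 := fun k i => hL _ (eL.symm k).2 i
  have hnotin : ∀ a : Fin r → ℤ, a ∉ L ↔ ∀ k, a ≠ f k := by
    intro a
    constructor
    · intro ha k he; exact ha (he ▸ (eL.symm k).2)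
    · intro h ha
      exact h (eL ⟨a, ha⟩) (by simp [hfdef])
  let eW : (Fin ℓ × Fin r × Bool) ≃ Fin (2 * r * ℓ) :=
    Fintype.equivFinOfCardEq (by simp; ring)
  let eV : RepSys.V r ℓ ≃ Fin (r + 2 * r * ℓ) :=
    (Equiv.sumCongr (Equiv.refl (Fin r)) eW).trans finSumFinEquiv
  have heV : ∀ j : Fin r, eV (Sum.inl j) = Fin.castLE (Nat.le_add_right r (2 * r * ℓ)) j := by
    intro j
    apply Fin.ext
    simp [eV]
  let eR : RepSys.Rw r ℓ ≃ Fin (2 * r + (6 * r + 1) * ℓ) :=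
    Fintype.equivFinOfCardEq (by simp; ring)
  refine ⟨Matrix.of fun i j => RepSys.Arow d (eR.symm i) (eV.symm j),
    fun i => RepSys.bv d f (eR.symm i), fun i j => RepSys.Arow_bound d hd _ _,
    fun i => RepSys.bv_bound d hd f hf _, ?_⟩
  intro a
  have hmv : ∀ (x : Fin (r + 2 * r * ℓ) → ℤ) (row : RepSys.Rw r ℓ),
      (Matrix.of fun i j => RepSys.Arow d (eR.symm i) (eV.symm j)).mulVec x (eR row)
        = RepSys.dot (RepSys.Arow d row) (x ∘ eV) := by
    intro x row
    simp only [Matrix.mulVec, dotProduct, Matrix.of_apply, Equiv.symm_apply_apply, RepSys.dot]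
    rw [← Equiv.sum_comp eV (fun j => RepSys.Arow d row (eV.symm j) * x j)]
    simp [Function.comp]
  rw [hnotin]
  rw [← RepSys.structured d hd f hf a]
  constructor
  · rintro ⟨x, hx, hxa⟩
    refine ⟨x ∘ eV, ?_, ?_⟩
    · intro row
      have := hx (eR row)
      rw [hmv] at this
      simpa using this
    · intro j
      simp only [Function.comp, heV j]
      exact hxa j
  · rintro ⟨y, hy, hya⟩
    refine ⟨y ∘ eV.symm, ?_, ?_⟩
    · intro i
      have h1 : (Matrix.of fun i j => RepSys.Arow d (eR.symm i) (eV.symm j)).mulVec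
          (y ∘ eV.symm) (eR (eR.symm i)) = RepSys.dot (RepSys.Arow d (eR.symm i))
          ((y ∘ eV.symm) ∘ eV) := hmv _ _
      rw [Equiv.apply_symm_apply] at h1
      rw [h1]
      have : (y ∘ eV.symm) ∘ eV = y := by funext w; simp
      rw [this]
      exact hy (eR.symm i)
    · intro j
      have : eV.symm (Fin.castLE (Nat.le_add_right r (2 * r * ℓ)) j) = Sum.inl j := by
        rw [← heV j, Equiv.symm_apply_apply]
      simp only [Function.comp, this]
      exact hya j
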